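/- arXiv:0807.1205 — 6 statements merged into one kernel-verified Lean document; each statement's English description precedes it below -/
import Mathlib

section
/- There exist positive constants C₁ and C₂ (depending only on π) such that for every probability vector ρ on {1,…,n}, C₁·‖ρ−π‖∞² ≤ H(ρ,π) ≤ C₂·‖ρ−π‖∞², where H(ρ,π) = Σᵢ ρᵢ log(ρᵢ/πᵢ) is the relative entropy. -/
open Finset Real

private lemma log_diff_ge' (b x : ℝ) (hb : 0 < b) (hbx : b ≤ x) (hx1 : x ≤ 1) :
    x - b ≤ Real.log x - Real.log b := by
  have hx : 0 < x := lt_of_lt_of_le hb hbx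
  have h := Real.log_le_sub_one_of_pos (show (0:ℝ) < b / x by positivity)
  rw [Real.log_div hb.ne' hx.ne'] at h
  have h2 : x * (Real.log b - Real.log x) ≤ b - x := by
    have := mul_le_mul_of_nonneg_left h hx.le
    calc x * (Real.log b - Real.log x) ≤ x * (b / x - 1) := this
      _ = b - x := by field_simp
  nlinarith [Real.log_le_sub_one_of_pos hx, Real.log_le_sub_one_of_pos hb]

private lemma key_lower (b : ℝ) (hb : 0 < b) (hb1 : b ≤ 1) (a : ℝ) (ha : 0 ≤ a)
    (ha1 : a ≤ 1) : a - b + (a - b)^2 / 2 ≤ a * Real.log (a / b) := by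
  rcases eq_or_lt_of_le ha with h0 | ha0
  · rw [← h0]
    simp
    nlinarith
  · rw [Real.log_div ha0.ne' hb.ne']
    set f : ℝ → ℝ := fun x => x * (Real.log x - Real.log b) - x + b - (x - b)^2/2 with hf
    have hfb : f b = 0 := by simp [hf]
    have hderiv : ∀ x : ℝ, 0 < x →
        HasDerivAt f (Real.log x - Real.log b - (x - b)) x := by
      intro x hx0
      have h1 : HasDerivAt (fun y : ℝ => y * (Real.log y - Real.log b))
          (1 * (Real.log x - Real.log b) + x * x⁻¹) x :=
        (hasDerivAt_id x).mul ((Real.hasDerivAt_log hx0.ne').sub_const _)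
      have hpow : HasDerivAt (fun y : ℝ => (y - b)^2) (2*(x-b)) x := by
        have := ((hasDerivAt_id x).sub_const b).pow 2
        simpa [Pi.pow_def] using this
      have hF := ((h1.sub (hasDerivAt_id x)).add_const b).sub (hpow.div_const 2)
      exact hF.congr_deriv (by rw [mul_inv_cancel₀ hx0.ne']; ring)
    have hfa : 0 ≤ f a := by
      rcases le_total a b with hab | hab
      · have hanti : AntitoneOn f (Set.Icc a b) := by
          apply antitoneOn_of_deriv_nonpos (convex_Icc a b)
          · intro x hx
            exact (hderiv x (lt_of_lt_of_le ha0 hx.1)).continuousAt.continuousWithinAt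
          · intro x hx
            rw [interior_Icc] at hx
            exact (hderiv x (lt_trans ha0 hx.1)).differentiableAt.differentiableWithinAt
          · intro x hx
            rw [interior_Icc] at hx
            rw [(hderiv x (lt_trans ha0 hx.1)).deriv]
            have := log_diff_ge' x b (lt_trans ha0 hx.1) hx.2.le hb1
            linarith
        have := hanti (Set.left_mem_Icc.2 hab) (Set.right_mem_Icc.2 hab) hab
        rw [hfb] at this; exact this
      · have hmono : MonotoneOn f (Set.Icc b a) := by
          apply monotoneOn_of_deriv_nonneg (convex_Icc b a)
          · intro x hx
            exact (hderiv x (lt_of_lt_of_le hb hx.1)).continuousAt.continuousWithinAt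
          · intro x hx
            rw [interior_Icc] at hx
            exact (hderiv x (lt_trans hb hx.1)).differentiableAt.differentiableWithinAt
          · intro x hx
            rw [interior_Icc] at hx
            rw [(hderiv x (lt_trans hb hx.1)).deriv]
            have := log_diff_ge' b x hb hx.1.le (le_trans hx.2.le ha1)
            linarith
        have := hmono (Set.left_mem_Icc.2 hab) (Set.right_mem_Icc.2 hab) hab
        rw [hfb] at this; exact this
    simp only [hf] at hfa
    linarith

private lemma key_upper (b : ℝ) (hb : 0 < b) (a : ℝ) (ha : 0 ≤ a) :
    a * Real.log (a / b) ≤ (a - b)^2 / b + (a - b) := by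
  rcases eq_or_lt_of_le ha with h0 | ha0
  · rw [← h0, zero_mul]
    have hb' : ((0:ℝ) - b)^2 / b + ((0:ℝ) - b) = 0 := by
      field_simp
      ring
    rw [hb']
  · have h := Real.log_le_sub_one_of_pos (show (0:ℝ) < a / b by positivity)
    have h2 : a * Real.log (a / b) ≤ a * (a / b - 1) :=
      mul_le_mul_of_nonneg_left h ha
    have h3 : a * (a / b - 1) = (a - b)^2 / b + (a - b) := by
      field_simp
      ring
    linarith

/-- Lemma 2.1: the relative entropy `H(ρ, p) = ∑ i, ρ i * log (ρ i / p i)` is comparable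
to the squared ℓ∞ distance `‖ρ - p‖∞²` (the sup norm on `Fin n → ℝ`), uniformly over
probability vectors `ρ`; here `p` plays the role of the stationary distribution π. -/
theorem entropy_comparable_sup_dist_sq
    (n : ℕ) (hn : 1 ≤ n) (p : Fin n → ℝ)
    (hppos : ∀ i, 0 < p i) (hpsum : ∑ i, p i = 1) :
    ∃ C₁ C₂ : ℝ, 0 < C₁ ∧ 0 < C₂ ∧
      ∀ ρ : Fin n → ℝ, (∀ i, 0 ≤ ρ i) → ∑ i, ρ i = 1 →
        C₁ * ‖ρ - p‖ ^ 2 ≤ ∑ i, ρ i * Real.log (ρ i / p i) ∧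
        ∑ i, ρ i * Real.log (ρ i / p i) ≤ C₂ * ‖ρ - p‖ ^ 2 := by
  haveI : Nonempty (Fin n) := ⟨⟨0, hn⟩⟩
  set m : ℝ := Finset.univ.inf' Finset.univ_nonempty p with hm
  have hm_le : ∀ i, m ≤ p i := fun i => Finset.inf'_le p (Finset.mem_univ i)
  have hm_pos : 0 < m := by
    obtain ⟨i, _, hi⟩ := Finset.exists_mem_eq_inf' Finset.univ_nonempty p
    rw [hm, hi]; exact hppos i
  refine ⟨1/2, n / m, by norm_num, by positivity, ?_⟩
  intro ρ hρ hρsum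
  have hp1 : ∀ i, p i ≤ 1 := by
    intro i
    rw [← hpsum]
    exact Finset.single_le_sum (fun j _ => (hppos j).le) (Finset.mem_univ i)
  have hρ1 : ∀ i, ρ i ≤ 1 := by
    intro i
    rw [← hρsum]
    exact Finset.single_le_sum (fun j _ => hρ j) (Finset.mem_univ i)
  have hnorm_sq : ∀ i, (ρ i - p i)^2 ≤ ‖ρ - p‖^2 := by
    intro i
    have h := norm_le_pi_norm (ρ - p) i
    rw [Real.norm_eq_abs] at h
    have : (ρ i - p i)^2 = |(ρ - p) i|^2 := by rw [sq_abs]; rfl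
    rw [this]
    exact pow_le_pow_left₀ (abs_nonneg _) h 2
  constructor
  · -- lower bound
    have h1 : ‖ρ - p‖^2 ≤ ∑ i, (ρ i - p i)^2 := by
      obtain ⟨i₀, _, hi₀⟩ := Finset.exists_max_image Finset.univ (fun i => |(ρ - p) i|)
        ⟨Classical.arbitrary (Fin n), Finset.mem_univ _⟩
      have hle : ‖ρ - p‖ ≤ |(ρ - p) i₀| := by
        rw [pi_norm_le_iff_of_nonneg (abs_nonneg _)]
        intro i
        rw [Real.norm_eq_abs]
        exact hi₀ i (Finset.mem_univ i)
      calc ‖ρ - p‖^2 ≤ |(ρ - p) i₀|^2 := pow_le_pow_left₀ (norm_nonneg _) hle 2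
        _ = (ρ i₀ - p i₀)^2 := by rw [sq_abs]; rfl
        _ ≤ ∑ i, (ρ i - p i)^2 :=
          Finset.single_le_sum (f := fun i => (ρ i - p i)^2)
            (fun j _ => sq_nonneg _) (Finset.mem_univ i₀)
    have h2 : ∑ i, (ρ i - p i + (ρ i - p i)^2 / 2) ≤ ∑ i, ρ i * Real.log (ρ i / p i) :=
      Finset.sum_le_sum fun i _ => key_lower (p i) (hppos i) (hp1 i) (ρ i) (hρ i) (hρ1 i)
    have h3 : ∑ i, (ρ i - p i + (ρ i - p i)^2 / 2)
        = (∑ i, (ρ i - p i)^2) / 2 := by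
      rw [Finset.sum_add_distrib, Finset.sum_sub_distrib, hρsum, hpsum,
        ← Finset.sum_div]
      ring
    rw [h3] at h2
    linarith
  · -- upper bound
    have h2 : ∑ i, ρ i * Real.log (ρ i / p i)
        ≤ ∑ i, ((ρ i - p i)^2 / p i + (ρ i - p i)) :=
      Finset.sum_le_sum fun i _ => key_upper (p i) (hppos i) (ρ i) (hρ i)
    have h3 : ∑ i, ((ρ i - p i)^2 / p i + (ρ i - p i)) = ∑ i, (ρ i - p i)^2 / p i := by
      rw [Finset.sum_add_distrib, Finset.sum_sub_distrib, hρsum, hpsum]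
      ring
    have h4 : ∑ i, (ρ i - p i)^2 / p i ≤ ∑ _i : Fin n, ‖ρ - p‖^2 / m := by
      apply Finset.sum_le_sum
      intro i _
      exact div_le_div₀ (by positivity) (hnorm_sq i) hm_pos (hm_le i)
    have h5 : ∑ _i : Fin n, ‖ρ - p‖^2 / m = n / m * ‖ρ - p‖^2 := by
      rw [Finset.sum_const, Finset.card_univ, Fintype.card_fin]
      rw [nsmul_eq_mul]
      field_simp
    linarith
end

section
/- Let Q be an irreducible rate matrix on {1,…,n}, Pₜ = e^{tQ}, and set φ(v,t) = P_{−t}v. If v ∈ ℝⁿ and t ∈ ℝ satisfy 𝟙 + φ(v,t) ≥ 0 componentwise and v ≠ −𝟙, then for every s < t one has 𝟙 + φ(v,s) > 0 componentwise, where 𝟙 denotes the all-ones vector. -/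
open Finset Matrix

section Aux

variable {n : ℕ}

/-- The entrywise series for the matrix exponential. -/
lemma hasSum_exp_entry (A : Matrix (Fin n) (Fin n) ℝ) (i j : Fin n) :
    HasSum (fun k : ℕ => (k.factorial : ℝ)⁻¹ • (A ^ k) i j) ((NormedSpace.exp A) i j) := by
  have h : HasSum (fun k : ℕ => (k.factorial : ℝ)⁻¹ • A ^ k) (NormedSpace.exp A) := by
    letI : SeminormedRing (Matrix (Fin n) (Fin n) ℝ) := Matrix.linftyOpSemiNormedRing
    letI : NormedRing (Matrix (Fin n) (Fin n) ℝ) := Matrix.linftyOpNormedRing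
    letI : NormedAlgebra ℝ (Matrix (Fin n) (Fin n) ℝ) := Matrix.linftyOpNormedAlgebra
    rw [NormedSpace.exp_eq_tsum ℝ]
    exact (NormedSpace.expSeries_summable' (𝕂 := ℝ) A).hasSum
  have h2 := h.map (AddMonoidHom.mk' (fun B : Matrix (Fin n) (Fin n) ℝ => B i j)
      (fun _ _ => rfl)) (continuous_id.matrix_elem i j)
  exact h2

lemma pow_entry_nonneg {M : Matrix (Fin n) (Fin n) ℝ} (hM : ∀ i j, 0 ≤ M i j)
    (k : ℕ) : ∀ i j, 0 ≤ (M ^ k) i j := by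
  induction k with
  | zero =>
    intro i j
    rw [pow_zero, Matrix.one_apply]
    split_ifs <;> norm_num
  | succ m ih =>
    intro i j
    rw [pow_succ, Matrix.mul_apply]
    exact Finset.sum_nonneg fun l _ => mul_nonneg (ih i l) (hM l j)

lemma pow_path_pos {M : Matrix (Fin n) (Fin n) ℝ} (hM : ∀ i j, 0 ≤ M i j) :
    ∀ (k : ℕ) (c : Fin (k + 1) → Fin n), (∀ l : Fin k, 0 < M (c l.castSucc) (c l.succ)) →
      0 < (M ^ k) (c 0) (c (Fin.last k)) := by
  intro k
  induction k with
  | zero =>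
    intro c _
    have : Fin.last 0 = 0 := rfl
    simp [this, Matrix.one_apply]
  | succ m ih =>
    intro c hc
    rw [pow_succ, Matrix.mul_apply]
    apply Finset.sum_pos' (fun l _ => mul_nonneg (pow_entry_nonneg hM m _ _) (hM _ _))
    refine ⟨c (Fin.last m).castSucc, Finset.mem_univ _, ?_⟩
    have h1 : 0 < (M ^ m) (c 0) (c (Fin.last m).castSucc) := by
      have := ih (fun l => c l.castSucc) (fun l => by
        show 0 < M (c l.castSucc.castSucc) (c l.succ.castSucc)
        rw [← Fin.succ_castSucc]
        exact hc l.castSucc)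
      simpa using this
    have h2 := hc (Fin.last m)
    rw [Fin.succ_last] at h2
    exact mul_pos h1 h2

/-- Positivity of all entries of `exp (r • Q)` for an irreducible rate matrix and `r > 0`. -/
lemma exp_entry_pos (Q : Matrix (Fin n) (Fin n) ℝ)
    (hQoff : ∀ i j, i ≠ j → 0 ≤ Q i j)
    (hQrow : ∀ i, ∑ j, Q i j = 0)
    (hirr : ∀ i j : Fin n, i ≠ j →
      ∃ (k : ℕ) (c : Fin (k + 1) → Fin n), c 0 = i ∧ c (Fin.last k) = j ∧
        ∀ l : Fin k, 0 < Q (c l.castSucc) (c l.succ))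
    (r : ℝ) (hr : 0 < r) (i j : Fin n) :
    0 < (NormedSpace.exp (r • Q)) i j := by
  have hdiag : ∀ i, Q i i ≤ 0 := by
    intro i
    have h0 := hQrow i
    rw [← Finset.add_sum_erase _ _ (Finset.mem_univ i)] at h0
    have h1 : 0 ≤ ∑ j ∈ Finset.univ.erase i, Q i j :=
      Finset.sum_nonneg fun j hj => hQoff i j (Ne.symm (Finset.ne_of_mem_erase hj))
    linarith
  set α : ℝ := ∑ i, -Q i i with hα
  have hα0 : ∀ i, -Q i i ≤ α := fun i =>
    Finset.single_le_sum (f := fun i => -Q i i)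
      (fun l _ => neg_nonneg.mpr (hdiag l)) (Finset.mem_univ i)
  set M : Matrix (Fin n) (Fin n) ℝ := Q + α • (1 : Matrix (Fin n) (Fin n) ℝ) with hMdef
  have hMentry : ∀ a b, M a b = Q a b + α * (1 : Matrix (Fin n) (Fin n) ℝ) a b := by
    intro a b
    simp [hMdef, Matrix.add_apply, Matrix.smul_apply, smul_eq_mul]
  have hM : ∀ a b, 0 ≤ M a b := by
    intro a b
    rcases eq_or_ne a b with h | h
    · subst h
      rw [hMentry, Matrix.one_apply_eq, mul_one]
      linarith [hα0 a]
    · rw [hMentry, Matrix.one_apply_ne h, mul_zero, add_zero]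
      exact hQoff a b h
  have hMoff : ∀ a b, 0 < Q a b → 0 < M a b := by
    intro a b hab
    have hne : a ≠ b := by
      rintro rfl
      exact absurd hab (not_lt.mpr (hdiag a))
    rw [hMentry, Matrix.one_apply_ne hne, mul_zero, add_zero]
    exact hab
  have hdecomp : r • Q = r • M + (-(r * α)) • (1 : Matrix (Fin n) (Fin n) ℝ) := by
    rw [hMdef]
    module
  have hcomm : Commute (r • M) ((-(r * α)) • (1 : Matrix (Fin n) (Fin n) ℝ)) :=
    (Commute.one_right (r • M)).smul_right _
  have hsplit : NormedSpace.exp (r • Q) = Real.exp (-(r * α)) • NormedSpace.exp (r • M) := by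
    rw [hdecomp, Matrix.exp_add_of_commute _ _ hcomm]
    rw [Matrix.smul_one_eq_diagonal, Matrix.exp_diagonal]
    have hc : NormedSpace.exp (fun _ : Fin n => -(r * α)) =
        fun _ : Fin n => Real.exp (-(r * α)) := by
      funext x
      rw [Pi.coe_exp, ← Real.exp_eq_exp_ℝ]
    rw [hc, ← Matrix.smul_one_eq_diagonal, mul_smul_comm, mul_one]
  rw [hsplit, Matrix.smul_apply, smul_eq_mul]
  apply mul_pos (Real.exp_pos _)
  have hsum := hasSum_exp_entry (r • M) i j
  have hentry : ∀ k : ℕ, ((r • M) ^ k) i j = r ^ k * (M ^ k) i j := by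
    intro k
    rw [smul_pow, Matrix.smul_apply, smul_eq_mul]
  have hnn : ∀ k : ℕ, 0 ≤ (k.factorial : ℝ)⁻¹ • ((r • M) ^ k) i j := by
    intro k
    rw [smul_eq_mul, hentry]
    have h1 := pow_entry_nonneg hM k i j
    positivity
  obtain ⟨k, hkpos⟩ : ∃ k : ℕ, 0 < (k.factorial : ℝ)⁻¹ • ((r • M) ^ k) i j := by
    rcases eq_or_ne i j with h | h
    · refine ⟨0, ?_⟩
      subst h
      simp [Matrix.one_apply_eq]
    · obtain ⟨k, c, hc0, hcl, hcp⟩ := hirr i j h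
      refine ⟨k, ?_⟩
      have hMk : 0 < (M ^ k) i j := by
        have := pow_path_pos hM k c (fun l => hMoff _ _ (hcp l))
        rwa [hc0, hcl] at this
      rw [smul_eq_mul, hentry]
      have hf : (0 : ℝ) < (k.factorial : ℝ) := by positivity
      positivity
  calc (0 : ℝ) < (k.factorial : ℝ)⁻¹ • ((r • M) ^ k) i j := hkpos
    _ ≤ ∑' m : ℕ, (m.factorial : ℝ)⁻¹ • ((r • M) ^ m) i j :=
        Summable.le_tsum hsum.summable k (fun m _ => hnn m)
    _ = (NormedSpace.exp (r • M)) i j := hsum.tsum_eq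

/-- `exp A` fixes the all-ones vector whenever `A` kills it. -/
lemma exp_mulVec_ones (A : Matrix (Fin n) (Fin n) ℝ)
    (hA : A.mulVec (fun _ => 1) = 0) :
    (NormedSpace.exp A).mulVec (fun _ => 1) = fun _ => 1 := by
  funext i
  have hrow : ∀ k : ℕ, k ≠ 0 → ∑ j, (A ^ k) i j = 0 := by
    intro k hk
    obtain ⟨m, rfl⟩ := Nat.exists_eq_succ_of_ne_zero hk
    have h : (A ^ (m + 1)).mulVec (fun _ => 1) = 0 := by
      rw [pow_succ, ← Matrix.mulVec_mulVec, hA, Matrix.mulVec_zero]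
    have := congrFun h i
    simpa [Matrix.mulVec, dotProduct] using this
  have hS : HasSum (fun k : ℕ => ∑ j, (k.factorial : ℝ)⁻¹ • (A ^ k) i j)
      (∑ j, (NormedSpace.exp A) i j) :=
    hasSum_sum (fun j _ => hasSum_exp_entry A i j)
  have hfun : (fun k : ℕ => ∑ j, (k.factorial : ℝ)⁻¹ • (A ^ k) i j)
      = fun k : ℕ => if k = 0 then (1 : ℝ) else 0 := by
    funext k
    rcases eq_or_ne k 0 with rfl | hk
    · simp [Matrix.one_apply]
    · simp only [if_neg hk, smul_eq_mul, ← Finset.mul_sum, hrow k hk, mul_zero]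
  rw [hfun] at hS
  have hcalc : ∑ j, (NormedSpace.exp A) i j = 1 :=
    hS.unique (hasSum_ite_eq 0 (1 : ℝ))
  simpa [Matrix.mulVec, dotProduct] using hcalc

end Aux

/-- Lemma A.1: with `φ(v,t) = P_{-t} v = e^{-tQ} v` for an irreducible rate matrix `Q`,
if `𝟙 + φ(v,t) ≥ 0` componentwise and `v ≠ -𝟙`, then `𝟙 + φ(v,s) > 0` componentwise
for every `s < t`. -/
theorem one_add_phi_pos_of_earlier
    (n : ℕ) (Q : Matrix (Fin n) (Fin n) ℝ)
    (hQoff : ∀ i j, i ≠ j → 0 ≤ Q i j)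
    (hQrow : ∀ i, ∑ j, Q i j = 0)
    (hirr : ∀ i j : Fin n, i ≠ j →
      ∃ (k : ℕ) (c : Fin (k + 1) → Fin n), c 0 = i ∧ c (Fin.last k) = j ∧
        ∀ l : Fin k, 0 < Q (c l.castSucc) (c l.succ))
    (v : Fin n → ℝ) (t : ℝ)
    (hnonneg : ∀ i, 0 ≤ 1 + (NormedSpace.exp ((-t) • Q)).mulVec v i)
    (hv : v ≠ fun _ => (-1 : ℝ)) :
    ∀ s : ℝ, s < t → ∀ i, 0 < 1 + (NormedSpace.exp ((-s) • Q)).mulVec v i := by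
  classical
  have hQones : Q.mulVec (fun _ => 1) = 0 := by
    funext i
    simpa [Matrix.mulVec, dotProduct] using hQrow i
  have key : ∀ τ : ℝ, (NormedSpace.exp (τ • Q)).mulVec (fun _ => 1) = fun _ => 1 := by
    intro τ
    apply exp_mulVec_ones
    rw [Matrix.smul_mulVec, hQones, smul_zero]
  set w : Fin n → ℝ := (fun _ => 1) + v with hw
  have hrw : ∀ (τ : ℝ) (i : Fin n),
      1 + (NormedSpace.exp (τ • Q)).mulVec v i
        = (NormedSpace.exp (τ • Q)).mulVec w i := by
    intro τ i
    rw [hw, Matrix.mulVec_add, Pi.add_apply, key τ]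
  intro s hs i
  set x : Fin n → ℝ := (NormedSpace.exp ((-t) • Q)).mulVec w with hx
  have hxnn : ∀ j, 0 ≤ x j := by
    intro j
    have h := hnonneg j
    rwa [hrw (-t) j] at h
  have hxpos : ∃ j, 0 < x j := by
    by_contra hcon
    push_neg at hcon
    have hx0 : x = 0 := by
      funext j
      exact le_antisymm (hcon j) (hxnn j)
    have hinv : NormedSpace.exp (t • Q) * NormedSpace.exp ((-t) • Q) = 1 := by
      rw [← Matrix.exp_add_of_commute _ _ (((Commute.refl Q).smul_left t).smul_right (-t))]
      have : t • Q + (-t) • Q = (0 : Matrix (Fin n) (Fin n) ℝ) := by module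
      rw [this, NormedSpace.exp_zero]
    have hw0 : w = 0 := by
      have h1 : (NormedSpace.exp (t • Q)).mulVec x = w := by
        rw [hx, Matrix.mulVec_mulVec, hinv, Matrix.one_mulVec]
      rw [hx0, Matrix.mulVec_zero] at h1
      exact h1.symm
    apply hv
    funext j
    have h2 : w j = 0 := by rw [hw0]; rfl
    have h3 : (1 : ℝ) + v j = 0 := h2
    linarith
  obtain ⟨j0, hj0⟩ := hxpos
  have hsplit : NormedSpace.exp ((-s) • Q)
      = NormedSpace.exp ((t - s) • Q) * NormedSpace.exp ((-t) • Q) := by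
    rw [← Matrix.exp_add_of_commute _ _ (((Commute.refl Q).smul_left (t - s)).smul_right (-t))]
    congr 1
    module
  rw [hrw (-s) i, hsplit, ← Matrix.mulVec_mulVec, ← hx]
  have hE := exp_entry_pos Q hQoff hQrow hirr (t - s) (by linarith)
  show 0 < (NormedSpace.exp ((t - s) • Q)).mulVec x i
  rw [Matrix.mulVec]
  apply Finset.sum_pos' (fun j _ => mul_nonneg (le_of_lt (hE i j)) (hxnn j))
  exact ⟨j0, Finset.mem_univ _, mul_pos (hE i j0) hj0⟩
end

section
/- Let C = A + iB be an invertible (n−1)×(n−1) complex matrix with A, B real matrices. Then there exists p ∈ [0,1] such that the real matrix pA + (1−p)B is invertible. -/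
open Matrix Polynomial

/-- If `C = A + iB` is an invertible complex square matrix with `A`, `B` real, then
`pA + (1-p)B` is invertible for some `p ∈ [0,1]`. -/
theorem exists_real_combination_invertible
    (m : ℕ) (A B : Matrix (Fin m) (Fin m) ℝ)
    (hC : IsUnit (A.map (fun a => (a : ℂ)) + Complex.I • B.map (fun a => (a : ℂ))).det) :
    ∃ p : ℝ, p ∈ Set.Icc (0 : ℝ) 1 ∧ IsUnit (p • A + (1 - p) • B).det := by
  set A' : Matrix (Fin m) (Fin m) ℂ := A.map (fun a => (a : ℂ)) with hA'
  set B' : Matrix (Fin m) (Fin m) ℂ := B.map (fun a => (a : ℂ)) with hB'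
  -- the polynomial P(z) = det (z A' + (1-z) B')
  set P : Polynomial ℂ :=
    (Matrix.of fun i j => C (A' i j) * X + C (B' i j) * (1 - X)).det with hP
  have heval : ∀ z : ℂ, P.eval z = (z • A' + (1 - z) • B').det := by
    intro z
    rw [hP, show eval z = ⇑(evalRingHom z) from rfl, RingHom.map_det]
    congr 1
    ext i j
    simp only [RingHom.mapMatrix_apply, Matrix.map_apply, Matrix.of_apply, Matrix.add_apply,
      Matrix.smul_apply, smul_eq_mul, coe_evalRingHom,
      eval_mul, eval_add, eval_C, eval_X, eval_sub, eval_one]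
    ring
  -- P is not the zero polynomial: evaluate at 1/(1+i)
  have hz : (1 + Complex.I) ≠ 0 := by
    intro h
    have := congrArg Complex.im h
    simp at this
  have hPne : P ≠ 0 := by
    intro h0
    have h1 : P.eval (1 / (1 + Complex.I)) = 0 := by rw [h0]; simp
    rw [heval] at h1
    have hcomb : (1 / (1 + Complex.I)) • A' + (1 - 1 / (1 + Complex.I)) • B'
        = (1 / (1 + Complex.I)) • (A' + Complex.I • B') := by
      have : (1 : ℂ) - 1 / (1 + Complex.I) = (1 / (1 + Complex.I)) * Complex.I := by
        field_simp
        ring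
      rw [this, smul_add, smul_smul]
    rw [hcomb, Matrix.det_smul] at h1
    have : (1 / (1 + Complex.I)) ≠ 0 := one_div_ne_zero hz
    rcases mul_eq_zero.mp h1 with h | h
    · exact this (pow_eq_zero_iff'.mp h).1
    · exact hC.ne_zero h
  -- the roots of P form a finite set
  have hroots : {z : ℂ | P.IsRoot z}.Finite := Polynomial.finite_setOf_isRoot hPne
  have hSfin : {p : ℝ | P.IsRoot (p : ℂ)}.Finite := by
    have := hroots.preimage (f := fun p : ℝ => (p : ℂ))
      (Set.injOn_of_injective Complex.ofReal_injective)
    exact this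
  have hinf : (Set.Icc (0:ℝ) 1).Infinite := Set.Icc_infinite (by norm_num)
  obtain ⟨p, hp⟩ := (hinf.diff hSfin).nonempty
  refine ⟨p, hp.1, ?_⟩
  have hnr : ¬ P.IsRoot (p : ℂ) := hp.2
  rw [Polynomial.IsRoot, heval] at hnr
  have hmap : ((p • A + (1 - p) • B).map (fun a => (a : ℂ)))
      = (p : ℂ) • A' + (1 - (p : ℂ)) • B' := by
    ext i j
    simp [Matrix.map_apply, hA', hB']
  have hdet : ((p • A + (1 - p) • B).det : ℂ) = ((p : ℂ) • A' + (1 - (p : ℂ)) • B').det := by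
    rw [← hmap]
    exact RingHom.map_det Complex.ofRealHom _
  rw [isUnit_iff_ne_zero]
  intro h
  apply hnr
  rw [← hdet, h, Complex.ofReal_zero]
end

section
/- Let φ(v,t) = e^{−tQ}v and define for v ∈ ℝⁿ with 𝟙 + φ(v,t) ≠ 0 componentwise on an open set V, the function h_v(t,x) = e^{φ̃(v,t)} ∏_{i=1}^n (1 + φᵢ(v,t))^{xᵢ}, where φ̃(v,·) is a primitive of t ↦ Σᵢ [μᵢ φᵢ(v,t)/(1+φᵢ(v,t)) − λᵢ φᵢ(v,t)] on V. Then h_v is space–time harmonic for the generator Ω on V × (ℕ_{>0})ⁿ, i.e., ∂h_v/∂t (t,x) + Ω(h_v(t,·))(x) = 0 whenever t ∈ V and all xᵢ ≥ 1. -/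
open Finset Matrix

lemma exp_mulVec_hasDerivAt {n : ℕ} (Q : Matrix (Fin n) (Fin n) ℝ) (v : Fin n → ℝ)
    (i : Fin n) (t : ℝ) :
    HasDerivAt (fun s : ℝ => (NormedSpace.exp ((-s) • Q)).mulVec v i)
      (-(Q.mulVec ((NormedSpace.exp ((-t) • Q)).mulVec v)) i) t := by
  letI : SeminormedRing (Matrix (Fin n) (Fin n) ℝ) := Matrix.linftyOpSemiNormedRing
  letI : NormedRing (Matrix (Fin n) (Fin n) ℝ) := Matrix.linftyOpNormedRing
  letI : NormedAlgebra ℝ (Matrix (Fin n) (Fin n) ℝ) := Matrix.linftyOpNormedAlgebra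
  have h1 : HasDerivAt (fun u : ℝ => NormedSpace.exp (u • Q))
      (Q * NormedSpace.exp ((-t) • Q)) (-t) := hasDerivAt_exp_smul_const' Q (-t)
  have h2 : HasDerivAt (fun s : ℝ => NormedSpace.exp ((-s) • Q))
      (-(Q * NormedSpace.exp ((-t) • Q))) t := by
    have := h1.scomp t (hasDerivAt_neg t)
    simp only [Function.comp_def, neg_smul, one_smul] at this ⊢
    exact this
  let L : Matrix (Fin n) (Fin n) ℝ →ₗ[ℝ] ℝ :=
    { toFun := fun M => M.mulVec v i
      map_add' := fun A B => by simp [Matrix.add_mulVec, Pi.add_apply]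
      map_smul' := fun c A => by simp [Matrix.smul_mulVec, Pi.smul_apply] }
  have h3 := (L.toContinuousLinearMap.hasFDerivAt
    (x := NormedSpace.exp ((-t) • Q))).comp_hasDerivAt t h2
  have : L (-(Q * NormedSpace.exp ((-t) • Q)))
      = -(Q.mulVec ((NormedSpace.exp ((-t) • Q)).mulVec v)) i := by
    simp [L, Matrix.neg_mulVec, Matrix.mulVec_mulVec]
  have h4 : HasDerivAt (fun s : ℝ => (NormedSpace.exp ((-s) • Q)).mulVec v i)
      (L (-(Q * NormedSpace.exp ((-t) • Q)))) t := h3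
  rw [this] at h4
  exact h4

lemma key_prod {n : ℕ} (a : Fin n → ℝ) (y z c d : Fin n → ℕ)
    (hyz : ∀ k, y k + c k = z k + d k) :
    (∏ k, a k ^ y k) * ∏ k, a k ^ c k = (∏ k, a k ^ z k) * ∏ k, a k ^ d k := by
  rw [← Finset.prod_mul_distrib, ← Finset.prod_mul_distrib]
  simp_rw [← pow_add]
  exact Finset.prod_congr rfl fun k _ => by rw [hyz k]

lemma prod_pow_single {n : ℕ} (a : Fin n → ℝ) (i : Fin n) :
    (∏ k, a k ^ (if k = i then 1 else 0)) = a i := by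
  simp [pow_ite]

/-- Proposition 3.1: with `φ(v,t) = e^{-tQ} v` and `φt` a primitive of
`t ↦ ∑ᵢ (μᵢ φᵢ/(1+φᵢ) - λᵢ φᵢ)` on an open set `V` on which `1 + φᵢ(v,t) ≠ 0`, the
function `h_v(t,x) = e^{φt(t)} ∏ᵢ (1 + φᵢ(v,t))^{xᵢ}` is space–time harmonic for the
mobile-network generator `Ω` on `V × (ℕ_{>0})ⁿ`:
`∂h_v/∂t(t,x) + Ω(h_v(t,·))(x) = 0`. -/
theorem harmonic_h_v
    (n : ℕ) (Q : Matrix (Fin n) (Fin n) ℝ)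
    (hQrow : ∀ i, ∑ j, Q i j = 0)
    (lam serv : Fin n → ℝ) (hlam : ∀ i, 0 ≤ lam i) (hserv : ∀ i, 0 ≤ serv i)
    (v : Fin n → ℝ) (V : Set ℝ) (hV : IsOpen V)
    (φ : Fin n → ℝ → ℝ)
    (hφ : ∀ i t, φ i t = (NormedSpace.exp ((-t) • Q)).mulVec v i)
    (hVne : ∀ t ∈ V, ∀ i, 1 + φ i t ≠ 0)
    (φt : ℝ → ℝ)
    (hφt : ∀ t ∈ V, HasDerivAt φt
      (∑ i, (serv i * (φ i t / (1 + φ i t)) - lam i * φ i t)) t)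
    (h : ℝ → (Fin n → ℕ) → ℝ)
    (hh : ∀ t x, h t x = Real.exp (φt t) * ∏ i, (1 + φ i t) ^ (x i)) :
    ∀ t ∈ V, ∀ x : Fin n → ℕ, (∀ i, 1 ≤ x i) →
      HasDerivAt (fun s => h s x)
        (-(∑ i, lam i * (h t (Function.update x i (x i + 1)) - h t x)
          + ∑ i, (if 0 < x i then serv i * (h t (Function.update x i (x i - 1)) - h t x)
              else 0)
          + ∑ i, ∑ j, if i ≠ j then
              Q i j * (x i : ℝ) *
                (h t (Function.update (Function.update x j (x j + 1)) i (x i - 1)) - h t x)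
            else 0)) t := by
  intro t ht x hx
  have ha : ∀ i, (1 + φ i t) ≠ 0 := hVne t ht
  -- derivative of φ i
  set D : Fin n → ℝ := fun i => ∑ j, Q i j * φ j t with hD
  have hderiv : ∀ i, HasDerivAt (φ i) (-(D i)) t := by
    intro i
    have h1 := exp_mulVec_hasDerivAt Q v i t
    have hf : (fun s : ℝ => (NormedSpace.exp ((-s) • Q)).mulVec v i) = φ i := by
      funext s; rw [hφ i s]
    have hval : -(Q.mulVec ((NormedSpace.exp ((-t) • Q)).mulVec v)) i = -(D i) := by
      have hφ' : ∀ j, φ j t = ((NormedSpace.exp ((-t) • Q)).mulVec v) j := fun j => hφ j t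
      simp only [hD, Pi.neg_apply, hφ']
      simp [Matrix.mulVec, dotProduct]
    rw [hf, hval] at h1
    exact h1
  -- derivative of each factor
  have hpow : ∀ i, HasDerivAt (fun s => (1 + φ i s) ^ (x i))
      ((x i : ℝ) * (1 + φ i t) ^ (x i - 1) * (-(D i))) t :=
    fun i => ((hderiv i).const_add 1).pow (x i)
  have hprod : HasDerivAt (fun s => ∏ i, (1 + φ i s) ^ (x i))
      (∑ i, (∏ j ∈ Finset.univ.erase i, (1 + φ j t) ^ (x j)) *
        ((x i : ℝ) * (1 + φ i t) ^ (x i - 1) * (-(D i)))) t := by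
    simpa [smul_eq_mul] using HasDerivAt.fun_finsetProd (fun i _ => hpow i)
  have hE := (hφt t ht).exp
  have hmain := hE.fun_mul hprod
  have hfun : (fun s => h s x) = fun s => Real.exp (φt s) * ∏ i, (1 + φ i s) ^ (x i) :=
    funext fun s => hh s x
  rw [hfun]
  refine hmain.congr_deriv (Eq.symm ?_)
  -- now pure algebra
  set E := Real.exp (φt t) with hEdef
  set P := ∏ i, (1 + φ i t) ^ (x i) with hP
  -- product identities
  have hup : ∀ i, (∏ k, (1 + φ k t) ^ (Function.update x i (x i + 1) k))
      = P * (1 + φ i t) := by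
    intro i
    have hcond : ∀ k, Function.update x i (x i + 1) k + (fun _ => 0) k
        = x k + (fun k => if k = i then 1 else 0) k := by
      intro k
      by_cases hk : k = i
      · subst hk; simp
      · simp [Function.update_of_ne hk, hk]
    have := key_prod (fun k => 1 + φ k t) (Function.update x i (x i + 1)) x
      (fun _ => 0) (fun k => if k = i then 1 else 0) hcond
    simpa [prod_pow_single, hP] using this
  have hdown : ∀ i, (∏ k, (1 + φ k t) ^ (Function.update x i (x i - 1) k))
      = P / (1 + φ i t) := by
    intro i
    have hcond : ∀ k, Function.update x i (x i - 1) k + (fun k => if k = i then 1 else 0) k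
        = x k + (fun _ => 0) k := by
      intro k
      by_cases hk : k = i
      · subst hk; simp [Nat.sub_add_cancel (hx k)]
      · simp [Function.update_of_ne hk, hk]
    have := key_prod (fun k => 1 + φ k t) (Function.update x i (x i - 1)) x
      (fun k => if k = i then 1 else 0) (fun _ => 0) hcond
    rw [eq_div_iff (ha i)]
    simpa [prod_pow_single, hP] using this
  have hmix : ∀ i j, i ≠ j →
      (∏ k, (1 + φ k t) ^ (Function.update (Function.update x j (x j + 1)) i (x i - 1) k))
      = P * (1 + φ j t) / (1 + φ i t) := by
    intro i j hij
    have hcond : ∀ k,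
        Function.update (Function.update x j (x j + 1)) i (x i - 1) k
          + (fun k => if k = i then 1 else 0) k
        = x k + (fun k => if k = j then 1 else 0) k := by
      intro k
      by_cases hk : k = i
      · subst hk
        simp [Function.update_of_ne (Ne.symm hij) , Function.update_self,
          Nat.sub_add_cancel (hx k), hij]
      · by_cases hk2 : k = j
        · subst hk2
          simp [Function.update_of_ne hk, hk, Ne.symm hij]
        · simp [Function.update_of_ne hk, Function.update_of_ne hk2, hk, hk2]
    have := key_prod (fun k => 1 + φ k t)
      (Function.update (Function.update x j (x j + 1)) i (x i - 1)) x
      (fun k => if k = i then 1 else 0) (fun k => if k = j then 1 else 0) hcond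
    rw [eq_div_iff (ha i)]
    simpa [prod_pow_single, hP] using this
  -- rewrite h values
  simp only [hh]
  simp only [← hEdef, ← hP]
  simp only [hup, hdown]
  -- first sum
  have e1 : ∀ i : Fin n, lam i * (E * (P * (1 + φ i t)) - E * P)
      = E * P * (lam i * φ i t) := fun i => by ring
  have e2 : ∀ i : Fin n, (if 0 < x i then serv i * (E * (P / (1 + φ i t)) - E * P) else 0)
      = -(E * P * (serv i * (φ i t / (1 + φ i t)))) := by
    intro i
    rw [if_pos (Nat.lt_of_lt_of_le Nat.zero_lt_one (hx i))]
    field_simp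
    linear_combination (serv i * E * P) * mul_inv_cancel₀ (ha i)
  have e3 : ∀ i : Fin n,
      (∑ j, if i ≠ j then Q i j * (x i : ℝ) *
          (E * (∏ k, (1 + φ k t) ^ (Function.update (Function.update x j (x j + 1)) i (x i - 1) k))
            - E * P) else 0)
      = (x i : ℝ) * (E * P / (1 + φ i t)) * D i := by
    intro i
    have hDrw : D i = ∑ j, Q i j * (φ j t - φ i t) := by
      simp only [hD, mul_sub, Finset.sum_sub_distrib, ← Finset.sum_mul, hQrow i, zero_mul,
        sub_zero]
    rw [hDrw, Finset.mul_sum]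
    refine Finset.sum_congr rfl fun j _ => ?_
    by_cases hij : i = j
    · subst hij
      simp
    · rw [if_pos hij, hmix i j hij]
      field_simp
      linear_combination (Q i j * (x i : ℝ) * E * P) * mul_inv_cancel₀ (ha i)
  simp only [e1, e2, e3]
  rw [Finset.mul_sum, Finset.sum_mul, Finset.mul_sum, ← Finset.sum_add_distrib,
    ← Finset.sum_add_distrib, ← Finset.sum_add_distrib, ← Finset.sum_neg_distrib]
  refine Finset.sum_congr rfl fun i _ => ?_
  have hPi : P = (1 + φ i t) ^ (x i) * ∏ j ∈ Finset.univ.erase i, (1 + φ j t) ^ (x j) :=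
    (Finset.mul_prod_erase Finset.univ _ (Finset.mem_univ i)).symm
  have hpow1 : (1 + φ i t) ^ (x i) = (1 + φ i t) ^ (x i - 1) * (1 + φ i t) := by
    rw [← pow_succ, Nat.sub_add_cancel (hx i)]
  have hPi' : P = (1 + φ i t) ^ (x i - 1) * (1 + φ i t) *
      (∏ j ∈ Finset.univ.erase i, (1 + φ j t) ^ (x j)) := by
    rw [hPi, hpow1]
  linear_combination
    (-((x i : ℝ) * E * D i * (1 + φ i t) ^ (x i - 1) *
        (∏ j ∈ Finset.univ.erase i, (1 + φ j t) ^ (x j)))) * mul_inv_cancel₀ (ha i)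
    + (-((x i : ℝ) * E * D i * (1 + φ i t)⁻¹)) * hPi'
end

section
/- With v = (u−1,…,u−1) for a real u ≠ 0, the harmonic function of the previous statement reduces to h_v(t, X(t)) = u^{L(t)} · e^{[λ(1−u) + μ(1−1/u)]t} where L(t) = Σᵢ Xᵢ(t); equivalently, the function g(t,x) = u^{|x|} e^{[λ(1−u)+μ(1−1/u)]t} satisfies ∂g/∂t + Ω(g(t,·))(x) = 0 for all x with all coordinates positive. -/
open Finset Matrix

/-- Remark 3.1: taking `v = (u-1)𝟙` with `u ≠ 0` in the family of harmonic functions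
yields the classical `M/M/1` martingale: `g(t,x) = u^{|x|} e^{[λ(1-u)+μ(1-1/u)]t}`
satisfies `∂g/∂t + Ω(g(t,·))(x) = 0` for every `x` with all coordinates positive, where
`Ω` is the mobile-network generator, `λ = ∑ᵢ λᵢ` and `μ = ∑ᵢ μᵢ`. -/
theorem mm1_harmonic
    (n : ℕ) (Q : Matrix (Fin n) (Fin n) ℝ)
    (hQoff : ∀ i j, i ≠ j → 0 ≤ Q i j)
    (hQrow : ∀ i, ∑ j, Q i j = 0)
    (lam serv : Fin n → ℝ) (hlam : ∀ i, 0 ≤ lam i) (hserv : ∀ i, 0 ≤ serv i)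
    (u : ℝ) (hu : u ≠ 0)
    (g : ℝ → (Fin n → ℕ) → ℝ)
    (hg : ∀ t x, g t x = u ^ (∑ i, x i) *
      Real.exp (((∑ i, lam i) * (1 - u) + (∑ i, serv i) * (1 - 1 / u)) * t)) :
    ∀ t : ℝ, ∀ x : Fin n → ℕ, (∀ i, 1 ≤ x i) →
      HasDerivAt (fun s => g s x)
        (-(∑ i, lam i * (g t (Function.update x i (x i + 1)) - g t x)
          + ∑ i, (if 0 < x i then serv i * (g t (Function.update x i (x i - 1)) - g t x)
              else 0)
          + ∑ i, ∑ j, if i ≠ j then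
              Q i j * (x i : ℝ) *
                (g t (Function.update (Function.update x j (x j + 1)) i (x i - 1)) - g t x)
            else 0)) t := by
  intro t x hx
  classical
  set c : ℝ := ((∑ i, lam i) * (1 - u) + (∑ i, serv i) * (1 - 1 / u)) with hc
  set S : ℕ := ∑ i, x i with hS
  have key : ∀ (f : Fin n → ℕ) (i : Fin n) (b : ℕ),
      (∑ j, Function.update f i b j) + f i = b + ∑ j, f j := by
    intro f i b
    rw [Finset.sum_update_of_mem (Finset.mem_univ i)]
    have h := Finset.sum_erase_add Finset.univ f (Finset.mem_univ i)
    simp only [Finset.sdiff_singleton_eq_erase]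
    omega
  have hle : ∀ i : Fin n, x i ≤ S :=
    fun i => Finset.single_le_sum (fun j _ => Nat.zero_le _) (Finset.mem_univ i)
  have hplus : ∀ i, (∑ j, Function.update x i (x i + 1) j) = S + 1 := by
    intro i; have := key x i (x i + 1); omega
  have hminus : ∀ i, (∑ j, Function.update x i (x i - 1) j) = S - 1 := by
    intro i; have := key x i (x i - 1); have := hx i; omega
  have hdouble : ∀ i j, i ≠ j →
      (∑ k, Function.update (Function.update x j (x j + 1)) i (x i - 1) k) = S := by
    intro i j hij
    have h1 := key (Function.update x j (x j + 1)) i (x i - 1)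
    rw [Function.update_of_ne hij] at h1
    have h2 := hplus j
    have := hx i
    omega
  have hE : HasDerivAt (fun s => g s x) (u ^ S * (Real.exp (c * t) * c)) t := by
    have h1 : HasDerivAt (fun s : ℝ => c * s) c t := by
      simpa using (hasDerivAt_id t).const_mul c
    have h2 := (h1.exp).const_mul (u ^ S)
    have hfun : (fun s => g s x) = fun s => u ^ S * Real.exp (c * s) := by
      funext s; rw [hg]
    rw [hfun]
    convert h2 using 1
  convert hE using 1
  have hS1 : ∀ i : Fin n, u ^ (S - 1) = u ^ S * u⁻¹ := by
    intro i
    have h1 : S - 1 + 1 = S := by have := hx i; have := hle i; omega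
    field_simp
    rw [← pow_succ, h1]
  have hA : ∀ i, lam i * (g t (Function.update x i (x i + 1)) - g t x)
      = lam i * (u ^ S * Real.exp (c * t) * (u - 1)) := by
    intro i
    rw [hg, hg, hplus i, pow_succ]
    ring
  have hB : ∀ i : Fin n, (if 0 < x i then serv i * (g t (Function.update x i (x i - 1)) - g t x) else 0)
      = serv i * (u ^ S * Real.exp (c * t) * (u⁻¹ - 1)) := by
    intro i
    have hpos : 0 < x i := hx i
    rw [if_pos hpos]
    rw [hg, hg, hminus i, hS1 i]
    ring
  have hC : ∀ i j : Fin n, (if i ≠ j then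
      Q i j * (x i : ℝ) *
        (g t (Function.update (Function.update x j (x j + 1)) i (x i - 1)) - g t x)
      else 0) = 0 := by
    intro i j
    split
    · next h => rw [hg, hg, hdouble i j h]; ring
    · rfl
  simp only [hA, hB, hC, Finset.sum_const_zero, add_zero]
  rw [← Finset.sum_mul, ← Finset.sum_mul]
  rw [hc]
  have : (1:ℝ) - 1/u = 1 - u⁻¹ := by rw [one_div]
  rw [this]
  ring
end

section
/- Let Q be a diagonalizable rate matrix with eigenvalues θ₁,…,θ_{n−1}, θₙ = 0, stationary distribution π with all πᵢ > 0, and trace tr(Q) = −θ. Let H : ℝ^{n−1} → ℋ, u ↦ (u, −Σ_{i<n} πᵢuᵢ/πₙ), J : ℝⁿ → ℝ^{n−1} the projection onto the first n−1 coordinates, and Δ = diag(π). Then for each t ≥ 0 the affine map Ψₜ : ℝ^{n−1} → ℝ^{n−1}, Ψₜ(u) = JΔ(P_{−t}Hu + 𝟙), is a bijection with inverse Ψₜ^{−1}(u) = JPₜ(Δ^{−1}Ku − 𝟙) (where K(u) = (u, 1 − Σ_{i<n}uᵢ)), and its Jacobian determinant equals e^{θt}·∏_{i=1}^{n−1} πᵢ.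 -/
open Finset Matrix



/-- Stationary vector is preserved by the matrix exponential. -/
lemma aux_vecMul_exp (m : ℕ) (Q : Matrix (Fin m) (Fin m) ℝ) (p : Fin m → ℝ)
    (hstat : Matrix.vecMul p Q = 0) (s : ℝ) :
    Matrix.vecMul p (NormedSpace.exp (s • Q)) = p := by
  letI : SeminormedRing (Matrix (Fin m) (Fin m) ℝ) := Matrix.linftyOpSemiNormedRing
  letI : NormedRing (Matrix (Fin m) (Fin m) ℝ) := Matrix.linftyOpNormedRing
  letI : NormedAlgebra ℝ (Matrix (Fin m) (Fin m) ℝ) := Matrix.linftyOpNormedAlgebra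
  have vsm : ∀ (c : ℝ) (A : Matrix (Fin m) (Fin m) ℝ),
      Matrix.vecMul p (c • A) = c • Matrix.vecMul p A := by
    intro c A; funext j
    simp only [Matrix.vecMul, dotProduct, Matrix.smul_apply, Pi.smul_apply,
      smul_eq_mul, Finset.mul_sum]
    exact Finset.sum_congr rfl fun k _ => by ring
  have hsQ : Matrix.vecMul p (s • Q) = 0 := by rw [vsm, hstat, smul_zero]
  have hpow : ∀ k : ℕ, Matrix.vecMul p ((s • Q) ^ (k + 1)) = 0 := by
    intro k
    induction k with
    | zero => simpa using hsQ
    | succ k ih =>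
        rw [pow_succ, ← Matrix.vecMul_vecMul, ih, Matrix.zero_vecMul]
  have hsum : Summable fun k : ℕ => ((k.factorial : ℝ)⁻¹) • (s • Q) ^ k :=
    NormedSpace.expSeries_summable' (𝕂 := ℝ) (s • Q)
  let f : Matrix (Fin m) (Fin m) ℝ →ₗ[ℝ] (Fin m → ℝ) :=
    { toFun := fun A => Matrix.vecMul p A
      map_add' := fun A B => Matrix.vecMul_add A B p
      map_smul' := fun c A => vsm c A }
  let g : Matrix (Fin m) (Fin m) ℝ →L[ℝ] (Fin m → ℝ) := f.toContinuousLinearMap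
  have hg : ∀ A, g A = Matrix.vecMul p A := fun A => rfl
  calc Matrix.vecMul p (NormedSpace.exp (s • Q))
      = g (∑' k : ℕ, ((k.factorial : ℝ)⁻¹) • (s • Q) ^ k) := by
        rw [← hg, NormedSpace.exp_eq_tsum ℝ]
    _ = ∑' k : ℕ, g (((k.factorial : ℝ)⁻¹) • (s • Q) ^ k) := g.map_tsum hsum
    _ = ∑' k : ℕ, ((k.factorial : ℝ)⁻¹) • Matrix.vecMul p ((s • Q) ^ k) := by
        exact tsum_congr fun k => vsm _ _
    _ = ((Nat.factorial 0 : ℝ)⁻¹) • Matrix.vecMul p ((s • Q) ^ 0) := by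
        refine tsum_eq_single 0 ?_
        rintro (_ | k) h
        · exact absurd rfl h
        · rw [hpow k, smul_zero]
    _ = p := by simp [Matrix.vecMul_one]

lemma aux_det_exp (m : ℕ) (Q : Matrix (Fin m) (Fin m) ℝ)
    (ω : Matrix (Fin m) (Fin m) ℂ) (hω : IsUnit ω.det)
    (θv : Fin m → ℂ)
    (hdiag : ω⁻¹ * Q.map (fun a => (a : ℂ)) * ω = Matrix.diagonal θv)
    (s : ℝ) :
    (NormedSpace.exp (s • Q)).det = Real.exp (s * Q.trace) := by
  letI : SeminormedRing (Matrix (Fin m) (Fin m) ℝ) := Matrix.linftyOpSemiNormedRing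
  letI : NormedRing (Matrix (Fin m) (Fin m) ℝ) := Matrix.linftyOpNormedRing
  letI : NormedAlgebra ℝ (Matrix (Fin m) (Fin m) ℝ) := Matrix.linftyOpNormedAlgebra
  letI : NormedAlgebra ℚ (Matrix (Fin m) (Fin m) ℝ) := Matrix.linftyOpNormedAlgebra
  letI : SeminormedRing (Matrix (Fin m) (Fin m) ℂ) := Matrix.linftyOpSemiNormedRing
  letI : NormedRing (Matrix (Fin m) (Fin m) ℂ) := Matrix.linftyOpNormedRing
  letI : NormedAlgebra ℝ (Matrix (Fin m) (Fin m) ℂ) := Matrix.linftyOpNormedAlgebra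
  set Qc : Matrix (Fin m) (Fin m) ℂ := Q.map (fun a => (a : ℂ)) with hQc
  have hωu : IsUnit ω := (Matrix.isUnit_iff_isUnit_det ω).mpr hω
  have hconj : Qc = ω * Matrix.diagonal θv * ω⁻¹ := by
    rw [← hdiag]
    rw [Matrix.mul_assoc, Matrix.mul_assoc, Matrix.mul_nonsing_inv _ hω, Matrix.mul_one,
      ← Matrix.mul_assoc, Matrix.mul_nonsing_inv _ hω, Matrix.one_mul]
  have htr : (Matrix.diagonal θv).trace = (Q.trace : ℂ) := by
    have h1 : (Matrix.diagonal θv).trace = Qc.trace := by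
      rw [← hdiag, Matrix.trace_mul_comm (ω⁻¹ * Qc) ω, ← Matrix.mul_assoc,
        Matrix.mul_nonsing_inv _ hω, Matrix.one_mul]
    rw [h1, hQc]
    simp [Matrix.trace, Matrix.diag, Matrix.map_apply]
  apply Complex.ofReal_injective
  have hcont : Continuous ((algebraMap ℝ ℂ).mapMatrix :
      Matrix (Fin m) (Fin m) ℝ →+* Matrix (Fin m) (Fin m) ℂ) := by
    show Continuous fun A : Matrix (Fin m) (Fin m) ℝ => A.map (algebraMap ℝ ℂ)
    exact continuous_id.matrix_map (algebraMapCLM ℝ ℂ).continuous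
  have hmap : (NormedSpace.exp (s • Q)).map (fun a => (a : ℂ))
      = NormedSpace.exp ((s • Q).map (fun a => (a : ℂ))) :=
    NormedSpace.map_exp ((algebraMap ℝ ℂ).mapMatrix) hcont (s • Q)
  have hsmulmap : (s • Q).map (fun a => (a : ℂ)) = (s : ℂ) • Qc := by
    ext i j
    simp [hQc, Matrix.map_apply]
  have hdetmap : ((NormedSpace.exp (s • Q)).det : ℂ)
      = ((NormedSpace.exp (s • Q)).map (fun a => (a : ℂ))).det :=
    RingHom.map_det (algebraMap ℝ ℂ) _
  rw [hdetmap, hmap, hsmulmap]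
  have hexpC : NormedSpace.exp ((s : ℂ) • Qc) = NormedSpace.exp ((s : ℂ) • Qc) :=
    rfl
  have hd2 : Matrix.diagonal (fun i => (s : ℂ) * θv i) = (s : ℂ) • Matrix.diagonal θv :=
    Matrix.diagonal_smul (s : ℂ) θv
  have hsc : (s : ℂ) • Qc = ω * Matrix.diagonal (fun i => (s : ℂ) * θv i) * ω⁻¹ := by
    simp only [hconj, hd2, Matrix.mul_smul, Matrix.smul_mul]
  rw [hexpC, hsc, Matrix.exp_conj ω _ hωu, Matrix.det_conj hωu, Matrix.exp_diagonal,
    Matrix.det_diagonal]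
  have hprod : ∏ i, NormedSpace.exp ((s : ℂ) * θv i)
      = Complex.exp (∑ i, (s : ℂ) * θv i) := by
    rw [Complex.exp_sum]
    exact Finset.prod_congr rfl fun i _ => by
      rw [Complex.exp_eq_exp_ℂ]
  have hsum : ∑ i, (s : ℂ) * θv i = (s : ℂ) * (Q.trace : ℂ) := by
    rw [← Finset.mul_sum, ← Matrix.trace_diagonal, htr]
  have hpi : (fun i => NormedSpace.exp ((fun i => (s : ℂ) * θv i) i))
      = NormedSpace.exp (fun i => (s : ℂ) * θv i) := by
    funext i
    exact (Pi.coe_exp (fun j => (s : ℂ) * θv j) i).symm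
  rw [← hpi, hprod, hsum, Complex.ofReal_exp, Complex.ofReal_mul]

lemma aux_lowertri (n : ℕ) (r : Fin (n + 1) → ℝ) (hr : r (Fin.last n) = 0) :
    ((1 : Matrix (Fin (n + 1)) (Fin (n + 1)) ℝ) +
      Matrix.of fun i j => if i = Fin.last n then r j else 0).det = 1 := by
  rw [Matrix.det_of_lowerTriangular]
  · refine Finset.prod_eq_one fun i _ => ?_
    by_cases hi : i = Fin.last n
    · subst hi; simp [Matrix.one_apply, hr]
    · simp [Matrix.one_apply, hi]
  · intro i j hij
    have hij' : i < j := hij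
    have hi : i ≠ Fin.last n := by
      rintro rfl
      exact absurd hij' (Fin.le_last j).not_gt
    have hne : i ≠ j := ne_of_lt hij'
    simp [Matrix.one_apply, hi, hne]

lemma aux_detC (n : ℕ) (M : Matrix (Fin (n + 1)) (Fin (n + 1)) ℝ) (p : Fin (n + 1) → ℝ)
    (hpne : ∀ i, p i ≠ 0) (hpM : Matrix.vecMul p M = p) :
    (Matrix.of fun i j : Fin n =>
        M i.castSucc j.castSucc -
          M i.castSucc (Fin.last n) * (p j.castSucc / p (Fin.last n))).det = M.det := by
  classical
  set r : Fin (n + 1) → ℝ := fun j => if j = Fin.last n then 0 else p j / p (Fin.last n)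
    with hrdef
  set c : Fin (n + 1) → ℝ := fun j => if j = Fin.last n then 0 else -(p j / p (Fin.last n))
    with hcdef
  set R : Matrix (Fin (n + 1)) (Fin (n + 1)) ℝ :=
    1 + Matrix.of fun i j => if i = Fin.last n then r j else 0 with hRdef
  set S : Matrix (Fin (n + 1)) (Fin (n + 1)) ℝ :=
    1 + Matrix.of fun i j => if i = Fin.last n then c j else 0 with hSdef
  have hstatj : ∀ j, ∑ k, p k * M k j = p j := by
    intro j
    have := congrFun hpM j
    simpa [Matrix.vecMul, dotProduct] using this
  have hRM : R * M = Matrix.of fun i j =>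
      if i = Fin.last n then p j / p (Fin.last n) else M i j := by
    rw [hRdef, Matrix.add_mul, Matrix.one_mul]
    ext i j
    simp only [Matrix.add_apply, Matrix.mul_apply, Matrix.of_apply]
    by_cases hi : i = Fin.last n
    · have hsum : ∑ k, r k * M k j = p j / p (Fin.last n) - M (Fin.last n) j := by
        calc ∑ k, r k * M k j
            = ∑ k, (p k * M k j / p (Fin.last n) -
                if k = Fin.last n then M (Fin.last n) j else 0) := by
              refine Finset.sum_congr rfl fun k _ => ?_
              by_cases hk : k = Fin.last n
              · subst hk
                rw [hrdef]
                simp only [eq_self_iff_true, if_true, zero_mul]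
                rw [mul_div_cancel_left₀ _ (hpne (Fin.last n)), sub_self]
              · rw [hrdef]
                simp only [if_neg hk]
                ring
          _ = (∑ k, p k * M k j) / p (Fin.last n) - M (Fin.last n) j := by
              rw [Finset.sum_sub_distrib, ← Finset.sum_div,
                Finset.sum_ite_eq' Finset.univ (Fin.last n)]
              simp
          _ = p j / p (Fin.last n) - M (Fin.last n) j := by rw [hstatj j]
      simp only [hi, eq_self_iff_true, if_true]
      rw [hsum]; ring
    · simp [hi]
  have hN : ∀ i j, (R * M * S) i j =
      if i = Fin.last n then (if j = Fin.last n then 1 else 0)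
      else (if j = Fin.last n then M i (Fin.last n)
        else M i j - M i (Fin.last n) * (p j / p (Fin.last n))) := by
    intro i j
    rw [hRM, hSdef, Matrix.mul_add, Matrix.mul_one]
    simp only [Matrix.add_apply, Matrix.mul_apply, Matrix.of_apply]
    rw [Finset.sum_congr rfl (fun k _ => show
        (if i = Fin.last n then p k / p (Fin.last n) else M i k) *
            (if k = Fin.last n then c j else 0)
          = (if k = Fin.last n then
              (if i = Fin.last n then p k / p (Fin.last n) else M i k) * c j else 0) from by
      by_cases hk : k = Fin.last n <;> simp [hk]),
      Finset.sum_ite_eq' Finset.univ (Fin.last n)]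
    simp only [Finset.mem_univ, if_true]
    by_cases hi : i = Fin.last n
    · by_cases hj : j = Fin.last n
      · simp [hi, hj, hcdef, div_self (hpne (Fin.last n))]
      · simp only [hi, hj, hcdef, eq_self_iff_true, if_true, if_neg hj, if_false]
        rw [div_self (hpne (Fin.last n))]
        ring
    · by_cases hj : j = Fin.last n
      · simp [hi, hj, hcdef]
      · simp only [hi, hj, hcdef, if_neg hi, if_neg hj, if_false]
        ring
  have hdetR : R.det = 1 := by
    rw [hRdef]
    exact aux_lowertri n r (by rw [hrdef]; simp)
  have hdetS : S.det = 1 := by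
    rw [hSdef]
    exact aux_lowertri n c (by rw [hcdef]; simp)
  have h1 : (R * M * S).det = M.det := by
    rw [Matrix.det_mul, Matrix.det_mul, hdetR, hdetS, one_mul, mul_one]
  rw [← h1, Matrix.det_succ_row _ (Fin.last n), Finset.sum_eq_single (Fin.last n)]
  · rw [hN, Fin.succAbove_last]
    have hpow : ((-1 : ℝ)) ^ (((Fin.last n) : ℕ) + ((Fin.last n) : ℕ)) = 1 :=
      Even.neg_one_pow ⟨((Fin.last n) : ℕ), rfl⟩
    rw [hpow, one_mul]
    simp only [eq_self_iff_true, if_true, one_mul]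
    congr 1
    ext i j
    simp only [Matrix.submatrix_apply, Matrix.of_apply]
    rw [hN, if_neg (Fin.castSucc_lt_last i).ne, if_neg (Fin.castSucc_lt_last j).ne]
  · intro b _ hb
    rw [hN, if_pos rfl, if_neg hb, mul_zero, zero_mul]
  · intro h
    exact absurd (Finset.mem_univ _) h

/-- Lemma A.3: with states indexed by `Fin (n+1)`, `H : ℝⁿ → ℋ`, `J` the projection onto
the first `n` coordinates, `K : ℝⁿ → 𝒦`, `Δ = diag(p)` for the stationary distribution
`p` of a diagonalizable rate matrix `Q` with eigenvalues `θ₁,…,θₙ, θ_{n+1} = 0`, the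
affine map `Ψₜ(u) = JΔ(P₋ₜ H u + 𝟙)` is a bijection of `ℝⁿ` with inverse
`u ↦ J Pₜ (Δ⁻¹ K u - 𝟙)`, and its Jacobian determinant is `e^{θ t} ∏_{i ≤ n} pᵢ` where
`θ = -tr Q`. -/
theorem psi_t_bijection_jacobian
    (n : ℕ) (Q : Matrix (Fin (n + 1)) (Fin (n + 1)) ℝ)
    (hQoff : ∀ i j, i ≠ j → 0 ≤ Q i j)
    (hQrow : ∀ i, ∑ j, Q i j = 0)
    (ω : Matrix (Fin (n + 1)) (Fin (n + 1)) ℂ) (hω : IsUnit ω.det)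
    (θv : Fin (n + 1) → ℂ)
    (hdiag : ω⁻¹ * Q.map (fun a => (a : ℂ)) * ω = Matrix.diagonal θv)
    (hθlast : θv (Fin.last n) = 0)
    (hcol : ∀ i, ω i (Fin.last n) = 1)
    (p : Fin (n + 1) → ℝ) (hppos : ∀ i, 0 < p i) (hpsum : ∑ i, p i = 1)
    (hstat : Matrix.vecMul p Q = 0)
    (H : (Fin n → ℝ) → Fin (n + 1) → ℝ)
    (hH : ∀ u, H u =
      Fin.snoc u (-(∑ i : Fin n, p i.castSucc * u i) / p (Fin.last n)))
    (K : (Fin n → ℝ) → Fin (n + 1) → ℝ)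
    (hK : ∀ u, K u = Fin.snoc u (1 - ∑ i : Fin n, u i))
    (J : (Fin (n + 1) → ℝ) → Fin n → ℝ)
    (hJ : ∀ v i, J v i = v i.castSucc)
    (Ψ Ψinv : ℝ → (Fin n → ℝ) → Fin n → ℝ)
    (hΨ : ∀ t u, Ψ t u =
      J fun i => p i * ((NormedSpace.exp ((-t) • Q)).mulVec (H u) i + 1))
    (hΨinv : ∀ t u, Ψinv t u =
      J ((NormedSpace.exp (t • Q)).mulVec fun i => K u i / p i - 1)) :
    ∀ t : ℝ, 0 ≤ t →
      Function.Bijective (Ψ t) ∧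
      (∀ u, Ψ t (Ψinv t u) = u ∧ Ψinv t (Ψ t u) = u) ∧
      (∀ u, LinearMap.det
          ((fderiv ℝ (Ψ t) u : (Fin n → ℝ) →L[ℝ] Fin n → ℝ) :
            (Fin n → ℝ) →ₗ[ℝ] Fin n → ℝ)
        = Real.exp (-Q.trace * t) * ∏ i : Fin n, p i.castSucc) := by
  intro t _ht
  classical
  have hpne : ∀ i, p i ≠ 0 := fun i => (hppos i).ne'
  have hmuldiv : ∀ a b : ℝ, a ≠ 0 → a * (b / a) = b := fun a b ha => by field_simp
  have hΨt : ∀ u, Ψ t u =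
      J fun i => p i * ((NormedSpace.exp ((-t) • Q)).mulVec (H u) i + 1) := hΨ t
  have hΨinvt : ∀ u, Ψinv t u =
      J ((NormedSpace.exp (t • Q)).mulVec fun i => K u i / p i - 1) := hΨinv t
  obtain ⟨E, hE⟩ : ∃ E, E = NormedSpace.exp ((-t) • Q) := ⟨_, rfl⟩
  obtain ⟨E', hE'⟩ : ∃ E', E' = NormedSpace.exp (t • Q) := ⟨_, rfl⟩
  rw [← hE] at hΨt
  rw [← hE'] at hΨinvt
  have hpME : Matrix.vecMul p E = p := by
    rw [hE]; exact aux_vecMul_exp (n + 1) Q p hstat (-t)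
  have hpME' : Matrix.vecMul p E' = p := by
    rw [hE']; exact aux_vecMul_exp (n + 1) Q p hstat t
  have hcomm : Commute ((-t) • Q) (t • Q) := ((Commute.refl Q).smul_left (-t)).smul_right t
  have h0 : (-t) • Q + t • Q = 0 := by rw [← add_smul]; norm_num
  have hMM' : E * E' = 1 := by
    rw [hE, hE', ← Matrix.exp_add_of_commute _ _ hcomm, h0, NormedSpace.exp_zero]
  have hM'M : E' * E = 1 := by
    rw [hE, hE', ← Matrix.exp_add_of_commute _ _ hcomm.symm]
    rw [show t • Q + (-t) • Q = 0 by rw [← add_smul]; norm_num, NormedSpace.exp_zero]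
  -- section lemmas
  have hHsec : ∀ w : Fin (n + 1) → ℝ, (∑ i, p i * w i) = 0 → H (J w) = w := by
    intro w hw
    rw [hH]
    funext x
    refine Fin.lastCases ?_ (fun i => ?_) x
    · rw [Fin.snoc_last]
      have h2 : ∑ i : Fin n, p i.castSucc * w i.castSucc
          + p (Fin.last n) * w (Fin.last n) = 0 := by
        rw [← Fin.sum_univ_castSucc (f := fun i => p i * w i)]; exact hw
      have h3 : ∑ i : Fin n, p i.castSucc * (J w) i
          = ∑ i : Fin n, p i.castSucc * w i.castSucc :=
        Finset.sum_congr rfl fun i _ => by rw [hJ]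
      rw [h3]
      have hplast := hpne (Fin.last n)
      field_simp
      linarith
    · rw [Fin.snoc_castSucc, hJ]
  have hKsec : ∀ w : Fin (n + 1) → ℝ, (∑ i, w i) = 1 → K (J w) = w := by
    intro w hw
    rw [hK]
    funext x
    refine Fin.lastCases ?_ (fun i => ?_) x
    · rw [Fin.snoc_last]
      have h2 : ∑ i : Fin n, w i.castSucc + w (Fin.last n) = 1 := by
        rw [← Fin.sum_univ_castSucc]; exact hw
      have h3 : ∑ i : Fin n, (J w) i = ∑ i : Fin n, w i.castSucc :=
        Finset.sum_congr rfl fun i _ => by rw [hJ]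
      rw [h3]; linarith
    · rw [Fin.snoc_castSucc, hJ]
  have hdotH : ∀ u, ∑ i, p i * H u i = 0 := by
    intro u
    rw [hH, Fin.sum_univ_castSucc]
    simp only [Fin.snoc_castSucc, Fin.snoc_last]
    have h4 : p (Fin.last n) * (-(∑ i : Fin n, p i.castSucc * u i) / p (Fin.last n))
        = -(∑ i : Fin n, p i.castSucc * u i) := by
      exact hmuldiv _ _ (hpne (Fin.last n))
    rw [h4]; ring
  have hsumK1 : ∀ u, ∑ i, K u i = 1 := by
    intro u
    rw [hK, Fin.sum_univ_castSucc]
    simp [Fin.snoc_castSucc, Fin.snoc_last]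
    try ring
  have hdot_pres : ∀ (A : Matrix (Fin (n + 1)) (Fin (n + 1)) ℝ), Matrix.vecMul p A = p →
      ∀ v, ∑ i, p i * (A.mulVec v) i = ∑ i, p i * v i := by
    intro A hA v
    have h1 := dotProduct_mulVec p A v
    simpa [dotProduct, hA] using h1
  -- right inverse
  have hright : ∀ u, Ψ t (Ψinv t u) = u := by
    intro u
    have hw0 : ∑ i, p i * (E'.mulVec (fun i => K u i / p i - 1)) i = 0 := by
      rw [hdot_pres E' hpME']
      have h5 : ∀ i, p i * (K u i / p i - 1) = K u i - p i := fun i => by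
        rw [mul_sub, mul_one, hmuldiv _ _ (hpne i)]
      rw [Finset.sum_congr rfl fun i _ => h5 i, Finset.sum_sub_distrib, hsumK1 u, hpsum,
        sub_self]
    rw [hΨinvt, hΨt, hHsec (E'.mulVec fun i => K u i / p i - 1) hw0]
    funext i
    rw [hJ, Matrix.mulVec_mulVec, hMM', Matrix.one_mulVec]
    show p i.castSucc * ((K u i.castSucc / p i.castSucc - 1) + 1) = u i
    rw [hK]
    simp only [Fin.snoc_castSucc]
    have := hpne i.castSucc
    field_simp
    ring
  -- left inverse
  have hleft : ∀ u, Ψinv t (Ψ t u) = u := by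
    intro u
    have hy1 : ∑ i, p i * (E.mulVec (H u) i + 1) = 1 := by
      have h6 : ∀ i, p i * (E.mulVec (H u) i + 1) = p i * (E.mulVec (H u)) i + p i :=
        fun i => by ring
      rw [Finset.sum_congr rfl fun i _ => h6 i, Finset.sum_add_distrib,
        hdot_pres E hpME (H u), hdotH u, hpsum]
      norm_num
    rw [hΨt, hΨinvt,
      hKsec (fun i => p i * (E.mulVec (H u) i + 1)) hy1]
    have hv : (fun i => (fun i => p i * (E.mulVec (H u) i + 1)) i / p i - 1)
        = E.mulVec (H u) := by
      funext i
      have := hpne i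
      field_simp
      ring
    rw [hv]
    funext i
    rw [hJ, Matrix.mulVec_mulVec, hM'M, Matrix.one_mulVec, hH]
    simp [Fin.snoc_castSucc]
  refine ⟨Function.bijective_iff_has_inverse.mpr ⟨Ψinv t, hleft, hright⟩,
    fun u => ⟨hright u, hleft u⟩, ?_⟩
  -- Jacobian determinant
  intro u
  set C : Matrix (Fin n) (Fin n) ℝ := Matrix.of fun i j : Fin n =>
      E i.castSucc j.castSucc -
        E i.castSucc (Fin.last n) * (p j.castSucc / p (Fin.last n)) with hCdef
  set B : Matrix (Fin n) (Fin n) ℝ := Matrix.of fun i j : Fin n =>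
      p i.castSucc * C i j with hBdef
  have key_sum : ∀ (a e : ℝ) (b d : Fin n → ℝ) (v : Fin n → ℝ) (pL : ℝ), pL ≠ 0 →
      a * ((∑ j, b j * v j + e * (-(∑ j, d j * v j) / pL)) + 1)
        = ∑ j, a * (b j - e * (d j / pL)) * v j + a := by
    intro a e b d v pL hpL
    rw [Finset.sum_congr rfl (fun j _ => show a * (b j - e * (d j / pL)) * v j
        = a * (b j * v j) - a * e / pL * (d j * v j) from by ring),
      Finset.sum_sub_distrib, ← Finset.mul_sum, ← Finset.mul_sum]
    field_simp
    ring
  have hMv : ∀ (w : Fin n → ℝ) (i : Fin n), E.mulVec (H w) i.castSucc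
      = ∑ j : Fin n, E i.castSucc j.castSucc * w j
        + E i.castSucc (Fin.last n) *
          (-(∑ j : Fin n, p j.castSucc * w j) / p (Fin.last n)) := by
    intro w i
    rw [hH]
    simp only [Matrix.mulVec, dotProduct]
    rw [Fin.sum_univ_castSucc]
    simp [Fin.snoc_castSucc, Fin.snoc_last]
  have hΨaff : Ψ t = fun w => B.mulVec w + fun i => p i.castSucc := by
    funext w i
    rw [hΨt, hJ]
    show p i.castSucc * (E.mulVec (H w) i.castSucc + 1) = B.mulVec w i + p i.castSucc
    rw [hMv w i]
    exact key_sum (p i.castSucc) (E i.castSucc (Fin.last n))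
      (fun j => E i.castSucc j.castSucc) (fun j => p j.castSucc) w (p (Fin.last n))
      (hpne (Fin.last n))
  have hfd : (fderiv ℝ (Ψ t) u : (Fin n → ℝ) →L[ℝ] Fin n → ℝ)
      = (Matrix.mulVecLin B).toContinuousLinearMap := by
    have h1 : HasFDerivAt (Ψ t) ((Matrix.mulVecLin B).toContinuousLinearMap) u := by
      rw [hΨaff]
      exact ((Matrix.mulVecLin B).toContinuousLinearMap.hasFDerivAt (x := u)).add_const _
    exact h1.fderiv
  rw [hfd, LinearMap.coe_toContinuousLinearMap, ← Matrix.toLin'_apply', LinearMap.det_toLin']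
  have hBdet : B.det = (∏ i : Fin n, p i.castSucc) * C.det := by
    rw [hBdef]
    exact Matrix.det_mul_column (fun i => p i.castSucc) C
  have hCdet : C.det = Real.exp (-t * Q.trace) := by
    rw [hCdef, aux_detC n E p hpne hpME, hE, aux_det_exp (n + 1) Q ω hω θv hdiag (-t)]
  rw [hBdet, hCdet]
  rw [show -t * Q.trace = -Q.trace * t by ring]
  ring
end
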